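/- Let k ∈ ℕ, let x₁,…,x_k ∈ ℝ², let t₁,…,t_k ≥ 0 with ∑_{i=1}^k t_i = 1, let λ ≥ 0, and define v : ℝ² → ℝ by v(x) = log( ∑_{i=1}^k t_i (1 + λ² ‖x − x_i‖²)^{−2} ). Then v is differentiable on ℝ² and ‖∇v(x)‖ ≤ 2λ for every x ∈ ℝ². -/

import Mathlib

lemma toda_aux (lam : ℝ) (hlam : 0 ≤ lam) (q x : EuclideanSpace ℝ (Fin 2)) :
    ∃ D : EuclideanSpace ℝ (Fin 2) →L[ℝ] ℝ,
      HasFDerivAt (fun y => ((1 + lam ^ 2 * ‖y - q‖ ^ 2) ^ 2)⁻¹) D x ∧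
      ‖D‖ ≤ 2 * lam * ((1 + lam ^ 2 * ‖x - q‖ ^ 2) ^ 2)⁻¹ := by
  set r : ℝ := ‖x - q‖ with hr
  have hr0 : 0 ≤ r := norm_nonneg _
  set h : ℝ := 1 + lam ^ 2 * r ^ 2 with hhdef
  have hh : 0 < h := by positivity
  have H1 : HasFDerivAt (fun y : EuclideanSpace ℝ (Fin 2) => ‖y - q‖ ^ 2)
      (2 • innerSL ℝ (x - q)) x := by
    simpa using ((hasFDerivAt_id x).sub_const q).norm_sq
  have H2 : HasFDerivAt (fun y : EuclideanSpace ℝ (Fin 2) => 1 + lam ^ 2 * ‖y - q‖ ^ 2)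
      ((lam ^ 2) • (2 • innerSL ℝ (x - q))) x := (H1.const_mul (lam ^ 2)).const_add 1
  have Hg : HasDerivAt (fun y : ℝ => ((y : ℝ) ^ 2)⁻¹)
      (-(↑2 * h ^ 1) / (h ^ 2) ^ 2) h :=
    (hasDerivAt_pow 2 h).inv (pow_ne_zero _ hh.ne')
  have HD := Hg.comp_hasFDerivAt x H2
  refine ⟨_, HD, ?_⟩
  have hkey : 2 * lam * r ≤ h := by nlinarith [sq_nonneg (1 - lam * r)]
  refine ContinuousLinearMap.opNorm_le_bound _ (by positivity) fun y => ?_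
  have hCS : |inner ℝ (x - q) y| ≤ r * ‖y‖ := by
    rw [hr]; exact abs_real_inner_le_norm _ _
  have happ : ((-(↑2 * h ^ 1) / (h ^ 2) ^ 2) • (lam ^ 2) • (2 • innerSL ℝ (x - q))) y
      = (-(2 * h) / h ^ 4) * (lam ^ 2 * (2 * inner ℝ (x - q) y)) := by
    simp [ContinuousLinearMap.smul_apply, innerSL_apply_apply, smul_eq_mul]
    rw [inner_sub_left]; ring
  rw [happ, Real.norm_eq_abs]
  have habs : |(-(2 * h) / h ^ 4) * (lam ^ 2 * (2 * inner ℝ (x - q) y))|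
      = (2 * h / h ^ 4) * (lam ^ 2 * (2 * |(inner ℝ (x - q) y : ℝ)|)) := by
    rw [abs_mul, abs_div, abs_neg, abs_mul, abs_mul]
    rw [abs_of_nonneg hh.le, abs_of_nonneg (sq_nonneg lam),
      abs_of_nonneg (by positivity : (0:ℝ) ≤ h ^ 4), abs_of_nonneg (by norm_num : (0:ℝ) ≤ 2)]
    rw [abs_mul, abs_of_nonneg (by norm_num : (0:ℝ) ≤ 2)]
  rw [habs]
  have h1 : 2 * h / h ^ 4 = 2 / h ^ 3 := by
    field_simp
  rw [h1, div_mul_eq_mul_div, div_le_iff₀ (by positivity : (0:ℝ) < h ^ 3)]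
  have h2 : 2 * lam * (h ^ 2)⁻¹ * ‖y‖ * h ^ 3 = 2 * lam * h * ‖y‖ := by
    field_simp
  rw [h2]
  nlinarith [mul_le_mul_of_nonneg_left hCS (by positivity : (0:ℝ) ≤ 4 * lam ^ 2),
    mul_le_mul_of_nonneg_right hkey (mul_nonneg hlam (norm_nonneg y))]

/-- The function `v(x) = log ( ∑ᵢ tᵢ (1 + λ² ‖x − xᵢ‖²)⁻² )` on `ℝ²`. -/
noncomputable def todaTestFun (k : ℕ) (t : Fin k → ℝ)
    (p : Fin k → EuclideanSpace ℝ (Fin 2)) (lam : ℝ)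
    (x : EuclideanSpace ℝ (Fin 2)) : ℝ :=
  Real.log (∑ i, t i * ((1 + lam ^ 2 * ‖x - p i‖ ^ 2) ^ 2)⁻¹)

/-- the gradient of `v` is bounded in norm by `2λ`. -/
theorem gradient_bound_of_todaTestFun (k : ℕ) (t : Fin k → ℝ)
    (p : Fin k → EuclideanSpace ℝ (Fin 2))
    (ht : ∀ i, 0 ≤ t i) (htsum : ∑ i, t i = 1)
    (lam : ℝ) (hlam : 0 ≤ lam) :
    (∀ x, DifferentiableAt ℝ (todaTestFun k t p lam) x) ∧
      (∀ x, ‖gradient (todaTestFun k t p lam) x‖ ≤ 2 * lam) := by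
  set f : Fin k → EuclideanSpace ℝ (Fin 2) → ℝ :=
    fun i y => ((1 + lam ^ 2 * ‖y - p i‖ ^ 2) ^ 2)⁻¹ with hf
  set S : EuclideanSpace ℝ (Fin 2) → ℝ := fun y => ∑ i, t i * f i y with hS
  have hSpos : ∀ x, 0 < S x := by
    intro x
    have hex : ∃ i : Fin k, 0 < t i := by
      by_contra hc
      push_neg at hc
      have h0 : ∀ i, t i = 0 := fun i => le_antisymm (hc i) (ht i)
      simp [h0] at htsum
    obtain ⟨i, hi⟩ := hex
    refine Finset.sum_pos' (fun j _ => mul_nonneg (ht j) (by positivity)) ⟨i, Finset.mem_univ i, ?_⟩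
    have hfi : 0 < f i x := by rw [hf]; positivity
    positivity
  have key : ∀ x : EuclideanSpace ℝ (Fin 2), ∃ D : EuclideanSpace ℝ (Fin 2) →L[ℝ] ℝ,
      HasFDerivAt (todaTestFun k t p lam) D x ∧ ‖D‖ ≤ 2 * lam := by
    intro x
    choose D hD hDn using fun i => toda_aux lam hlam (p i) x
    have HS : HasFDerivAt S (∑ i, t i • D i) x :=
      HasFDerivAt.fun_sum fun i _ => (hD i).const_mul (t i)
    have hDSn : ‖∑ i, t i • D i‖ ≤ 2 * lam * S x := by
      refine ContinuousLinearMap.opNorm_le_bound _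
        (mul_nonneg (by positivity) (hSpos x).le) fun y => ?_
      rw [ContinuousLinearMap.sum_apply]
      calc ‖∑ i, (t i • D i) y‖ ≤ ∑ i, ‖(t i • D i) y‖ := norm_sum_le _ _
        _ ≤ ∑ i, t i * (2 * lam * f i x) * ‖y‖ := by
            refine Finset.sum_le_sum fun i _ => ?_
            rw [ContinuousLinearMap.smul_apply, norm_smul, Real.norm_eq_abs,
              abs_of_nonneg (ht i)]
            calc t i * ‖D i y‖ ≤ t i * (‖D i‖ * ‖y‖) :=
                  mul_le_mul_of_nonneg_left ((D i).le_opNorm y) (ht i)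
              _ ≤ t i * (2 * lam * f i x * ‖y‖) := by
                  refine mul_le_mul_of_nonneg_left ?_ (ht i)
                  exact mul_le_mul_of_nonneg_right (hDn i) (norm_nonneg y)
              _ = t i * (2 * lam * f i x) * ‖y‖ := by ring
        _ = 2 * lam * S x * ‖y‖ := by
            rw [← Finset.sum_mul, hS]
            congr 1
            rw [Finset.mul_sum]
            exact Finset.sum_congr rfl fun i _ => by ring
    have Hv : HasFDerivAt (todaTestFun k t p lam) ((S x)⁻¹ • ∑ i, t i • D i) x :=
      (Real.hasDerivAt_log (hSpos x).ne').comp_hasFDerivAt x HS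
    refine ⟨_, Hv, ?_⟩
    refine ContinuousLinearMap.opNorm_le_bound _ (by positivity) fun y => ?_
    rw [ContinuousLinearMap.smul_apply, norm_smul, Real.norm_eq_abs,
      abs_of_nonneg (inv_nonneg.2 (hSpos x).le)]
    calc (S x)⁻¹ * ‖(∑ i, t i • D i) y‖
        ≤ (S x)⁻¹ * (2 * lam * S x * ‖y‖) := by
          refine mul_le_mul_of_nonneg_left ?_ (inv_nonneg.2 (hSpos x).le)
          calc ‖(∑ i, t i • D i) y‖ ≤ ‖∑ i, t i • D i‖ * ‖y‖ :=
                ContinuousLinearMap.le_opNorm _ y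
            _ ≤ 2 * lam * S x * ‖y‖ :=
                mul_le_mul_of_nonneg_right hDSn (norm_nonneg y)
      _ = 2 * lam * ‖y‖ := by field_simp [(hSpos x).ne']
  constructor
  · intro x
    obtain ⟨D, hD, -⟩ := key x
    exact hD.differentiableAt
  · intro x
    obtain ⟨D, hD, hDn⟩ := key x
    rw [gradient, LinearIsometryEquiv.norm_map, hD.fderiv]
    exact hDn
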